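/- For fixed real numbers λ > 0 and μ > 0, the function D ↦ l(D‖λ,μ) is continuous and strictly convex on ℝ. -/

import Mathlib

noncomputable section

/-- The M/M/1 cost `l(D‖λ,μ)`.  (Lean's conventions `Real.log 0 = 0` and `0 * y = 0`
implement the convention `0 · log 0 = 0`.) -/
def mmCost (D lam mu : ℝ) : ℝ :=
  D * Real.log ((D + Real.sqrt (D ^ 2 + 4 * lam * mu)) / (2 * lam))
    + lam + mu - Real.sqrt (D ^ 2 + 4 * lam * mu)

/-- For fixed real numbers `λ > 0` and `μ > 0`, the function `D ↦ l(D‖λ,μ)` is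
continuous and strictly convex on `ℝ`. -/
theorem mmCost_continuous_strictConvexOn (lam mu : ℝ) (hlam : 0 < lam) (hmu : 0 < mu) :
    Continuous (fun D => mmCost D lam mu) ∧
    StrictConvexOn ℝ Set.univ (fun D => mmCost D lam mu) := by
  have hc : 0 < 4 * lam * mu := by positivity
  -- basic positivity facts
  have hs_abs : ∀ D : ℝ, |D| < Real.sqrt (D ^ 2 + 4 * lam * mu) := by
    intro D
    have h : Real.sqrt (D ^ 2) < Real.sqrt (D ^ 2 + 4 * lam * mu) :=
      Real.sqrt_lt_sqrt (by positivity) (by linarith)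
    simpa [Real.sqrt_sq_eq_abs] using h
  have hs_pos : ∀ D : ℝ, 0 < Real.sqrt (D ^ 2 + 4 * lam * mu) := fun D =>
    lt_of_le_of_lt (abs_nonneg D) (hs_abs D)
  have hDs_pos : ∀ D : ℝ, 0 < D + Real.sqrt (D ^ 2 + 4 * lam * mu) := by
    intro D
    have h1 := hs_abs D
    have h2 := neg_abs_le D
    linarith
  have hg_pos : ∀ D : ℝ,
      0 < (D + Real.sqrt (D ^ 2 + 4 * lam * mu)) / (2 * lam) := by
    intro D
    exact div_pos (hDs_pos D) (by positivity)
  -- derivative of the sqrt part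
  have hs_deriv : ∀ D : ℝ, HasDerivAt (fun x : ℝ => Real.sqrt (x ^ 2 + 4 * lam * mu))
      (D / Real.sqrt (D ^ 2 + 4 * lam * mu)) D := by
    intro D
    have h1 : HasDerivAt (fun x : ℝ => x ^ 2 + 4 * lam * mu) (2 * D) D := by
      simpa using (hasDerivAt_pow 2 D).add_const (4 * lam * mu)
    have h2 := h1.sqrt (by positivity)
    have : (2 : ℝ) * D / (2 * Real.sqrt (D ^ 2 + 4 * lam * mu))
        = D / Real.sqrt (D ^ 2 + 4 * lam * mu) := by
      rw [mul_div_mul_left _ _ (two_ne_zero)]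
    rwa [this] at h2
  -- derivative of the whole cost
  have hf_deriv : ∀ D : ℝ, HasDerivAt (fun x => mmCost x lam mu)
      (Real.log ((D + Real.sqrt (D ^ 2 + 4 * lam * mu)) / (2 * lam))) D := by
    intro D
    set s := Real.sqrt (D ^ 2 + 4 * lam * mu) with hs
    have hinner : HasDerivAt (fun x : ℝ =>
        (x + Real.sqrt (x ^ 2 + 4 * lam * mu)) / (2 * lam))
        ((1 + D / s) / (2 * lam)) D :=
      ((hasDerivAt_id D).add (hs_deriv D)).div_const _
    have hlog : HasDerivAt (fun x : ℝ =>
        Real.log ((x + Real.sqrt (x ^ 2 + 4 * lam * mu)) / (2 * lam)))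
        (((1 + D / s) / (2 * lam)) / ((D + s) / (2 * lam))) D :=
      hinner.log (ne_of_gt (hg_pos D))
    have hmul : HasDerivAt (fun x : ℝ =>
        x * Real.log ((x + Real.sqrt (x ^ 2 + 4 * lam * mu)) / (2 * lam)))
        (1 * Real.log ((D + s) / (2 * lam))
          + D * (((1 + D / s) / (2 * lam)) / ((D + s) / (2 * lam)))) D :=
      (hasDerivAt_id D).mul hlog
    have htotal := ((hmul.add_const lam).add_const mu).sub (hs_deriv D)
    have heq : 1 * Real.log ((D + s) / (2 * lam))
          + D * (((1 + D / s) / (2 * lam)) / ((D + s) / (2 * lam))) - D / s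
        = Real.log ((D + s) / (2 * lam)) := by
      have hsne : s ≠ 0 := ne_of_gt (hs_pos D)
      have hDsne : D + s ≠ 0 := ne_of_gt (hDs_pos D)
      have hlamne : (2 : ℝ) * lam ≠ 0 := by positivity
      field_simp
      ring
    rw [heq] at htotal
    exact htotal.congr_of_eventuallyEq (Filter.Eventually.of_forall fun x => rfl)
  have hdiff : Differentiable ℝ (fun D => mmCost D lam mu) :=
    fun D => (hf_deriv D).differentiableAt
  have hcont : Continuous (fun D => mmCost D lam mu) := hdiff.continuous
  refine ⟨hcont, ?_⟩
  -- the derivative is strictly monotone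
  have hderiv_eq : deriv (fun D => mmCost D lam mu)
      = fun D => Real.log ((D + Real.sqrt (D ^ 2 + 4 * lam * mu)) / (2 * lam)) :=
    funext fun D => (hf_deriv D).deriv
  have hh_mono : StrictMono (fun D : ℝ => D + Real.sqrt (D ^ 2 + 4 * lam * mu)) := by
    apply strictMono_of_deriv_pos
    intro x
    have hx : HasDerivAt (fun D : ℝ => D + Real.sqrt (D ^ 2 + 4 * lam * mu))
        (1 + x / Real.sqrt (x ^ 2 + 4 * lam * mu)) x :=
      (hasDerivAt_id x).add (hs_deriv x)
    rw [hx.deriv]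
    have h1 := hDs_pos x
    have h2 := hs_pos x
    have : -1 < x / Real.sqrt (x ^ 2 + 4 * lam * mu) := by
      rw [neg_lt, ← neg_div]
      rw [div_lt_one h2]; linarith
    linarith
  have hmono : StrictMono (deriv (fun D => mmCost D lam mu)) := by
    rw [hderiv_eq]
    intro a b hab
    refine Real.log_lt_log (hg_pos a) ?_
    have h := hh_mono hab
    dsimp at h
    gcongr
  exact StrictMono.strictConvexOn_univ_of_deriv hcont hmono
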